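/- Let m ≥ 7 be an integer and let k be an integer with 0 ≤ k ≤ m² − 7. Then P_{R(m)}(k) + P_{R(m)}(k+3) > 0 if and only if k ∉ {1, 3, m²−10, m²−8}. -/
import Mathlib

set_option maxRecDepth 100000

namespace SquareKronecker

/-- `R m`: the set `{5, 7, 9, …, 2m - 1}` of odd integers between `5` and `2m - 1`. -/
def R (m : ℕ) : Finset ℕ :=
  (Finset.range (2 * m)).filter (fun j => Odd j ∧ 5 ≤ j)

/-- `P m j`: the number of subsets of `R m` whose elements sum to `j`
(so `P m 0 = 1`, counting the empty subset). -/
def P (m j : ℕ) : ℕ :=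
  ((R m).powerset.filter (fun S => S.sum id = j)).card

/-- The set of small non-representable values. -/
def B : Finset ℕ := {1, 2, 3, 4, 6, 8, 10}

lemma mem_R {m j : ℕ} : j ∈ R m ↔ j < 2 * m ∧ Odd j ∧ 5 ≤ j := by
  simp [R, Finset.mem_filter, Finset.mem_range]

lemma R_succ {m : ℕ} (hm : 2 ≤ m) : R (m + 1) = insert (2 * m + 1) (R m) := by
  ext j
  simp only [mem_R, Finset.mem_insert]
  constructor
  · rintro ⟨h1, ⟨t, ht⟩, h3⟩
    rcases Nat.lt_or_ge j (2 * m) with h | h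
    · exact Or.inr ⟨h, ⟨t, ht⟩, h3⟩
    · exact Or.inl (by omega)
  · rintro (rfl | ⟨h1, h2, h3⟩)
    · exact ⟨by omega, ⟨m, by omega⟩, by omega⟩
    · exact ⟨by omega, h2, h3⟩

lemma sum_R (m : ℕ) (hm : 3 ≤ m) : (R m).sum id = m ^ 2 - 4 := by
  induction m, hm using Nat.le_induction with
  | base => decide
  | succ n hn ih =>
    rw [R_succ (by omega), Finset.sum_insert (by rw [mem_R]; omega), ih]
    have h2 : 3 ^ 2 ≤ n ^ 2 := Nat.pow_le_pow_left hn 2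
    have h3 : (n + 1) ^ 2 = n ^ 2 + 2 * n + 1 := by ring
    simp only [id_eq]
    omega

lemma P_pos {m j : ℕ} : 0 < P m j ↔ ∃ A, A ⊆ R m ∧ A.sum id = j := by
  rw [P, Finset.card_pos, Finset.filter_nonempty_iff]
  simp [Finset.mem_powerset]

lemma rep_notin_B {m : ℕ} {A : Finset ℕ} (hA : A ⊆ R m) : A.sum id ∉ B := by
  intro hB
  have hodd : ∀ x ∈ A, x % 2 = 1 ∧ 5 ≤ x := by
    intro x hx
    obtain ⟨h1, ⟨t, ht⟩, h3⟩ := mem_R.mp (hA hx)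
    omega
  have hpar : A.sum id % 2 = A.card % 2 := by
    rw [Finset.sum_nat_mod]
    have h : (A.sum fun x => id x % 2) = A.sum fun _ => 1 :=
      Finset.sum_congr rfl (fun x hx => (hodd x hx).1)
    rw [h, Finset.sum_const, smul_eq_mul, mul_one]
  have hne : A.Nonempty := by
    rcases Finset.eq_empty_or_nonempty A with rfl | h
    · simp [B] at hB
    · exact h
  obtain ⟨x, hx⟩ := hne
  have hx5 := (hodd x hx).2
  have hxs : x ≤ A.sum id := Finset.single_le_sum (fun i _ => Nat.zero_le (id i)) hx
  simp only [B, Finset.mem_insert, Finset.mem_singleton] at hB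
  have hcp : 0 < A.card := Finset.card_pos.mpr ⟨x, hx⟩
  have h1c : 1 < A.card := by omega
  obtain ⟨a, ha, b, hb, hab⟩ := Finset.one_lt_card.mp h1c
  have hsub : ({a, b} : Finset ℕ) ⊆ A := by
    intro y hy
    simp only [Finset.mem_insert, Finset.mem_singleton] at hy
    rcases hy with rfl | rfl <;> assumption
  have hab2 : a + b ≤ A.sum id := by
    have h := Finset.sum_le_sum_of_subset (f := id) hsub
    rwa [Finset.sum_pair hab] at h
  have ha' := hodd a ha
  have hb' := hodd b hb
  omega

lemma rep_le {m : ℕ} {A : Finset ℕ} (hm : 3 ≤ m) (hA : A ⊆ R m) :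
    A.sum id ≤ m ^ 2 - 4 := by
  have h := Finset.sum_le_sum_of_subset (f := id) hA
  rwa [sum_R m hm] at h

lemma P_mono {m j : ℕ} (hm : 2 ≤ m) (h : 0 < P m j) : 0 < P (m + 1) j := by
  obtain ⟨A, hA, hs⟩ := P_pos.mp h
  refine P_pos.mpr ⟨A, ?_, hs⟩
  rw [R_succ hm]
  exact hA.trans (Finset.subset_insert _ _)

lemma P_compl {m j : ℕ} (hm : 3 ≤ m) (hj : j ≤ m ^ 2 - 4) (h : 0 < P m j) :
    0 < P m (m ^ 2 - 4 - j) := by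
  obtain ⟨A, hA, hs⟩ := P_pos.mp h
  refine P_pos.mpr ⟨R m \ A, Finset.sdiff_subset, ?_⟩
  have h2 := Finset.sum_sdiff (f := id) hA
  rw [sum_R m hm, hs] at h2
  simp only [id_eq] at h2 ⊢
  omega

lemma P_pos_imp {m j : ℕ} (hm : 3 ≤ m) (h : 0 < P m j) :
    j ≤ m ^ 2 - 4 ∧ j ∉ B ∧ m ^ 2 - 4 - j ∉ B := by
  obtain ⟨A, hA, hs⟩ := P_pos.mp h
  have hle : j ≤ m ^ 2 - 4 := hs ▸ rep_le hm hA
  refine ⟨hle, hs ▸ rep_notin_B hA, ?_⟩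
  obtain ⟨A', hA', hs'⟩ := P_pos.mp (P_compl hm hle h)
  exact hs' ▸ rep_notin_B hA'

lemma char_bwd : ∀ m, 10 ≤ m → ∀ j, j ∉ B → m ^ 2 - 4 - j ∉ B → j ≤ m ^ 2 - 4 → 0 < P m j := by
  intro m hm
  induction m, hm using Nat.le_induction with
  | base =>
    intro j h1 h2 h3
    have hd : ∀ j' < 97, j' ∉ B → 96 - j' ∉ B → 0 < P 10 j' := by decide
    have e : (10 : ℕ) ^ 2 = 100 := by norm_num
    rw [e] at h2 h3
    have e2 : 100 - 4 - j = 96 - j := by omega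
    rw [e2] at h2
    exact hd j (by omega) h1 h2
  | succ n hn ih =>
    intro j hj1 hj2 hj3
    have hsq : (n + 1) ^ 2 = n ^ 2 + 2 * n + 1 := by ring
    have big : 2 * n + 27 ≤ n ^ 2 := by nlinarith
    simp only [B, Finset.mem_insert, Finset.mem_singleton] at hj1 hj2
    rcases le_or_gt (2 * j) ((n + 1) ^ 2 - 4) with hc | hc
    · refine P_mono (by omega) (ih j ?_ ?_ ?_)
      · simp only [B, Finset.mem_insert, Finset.mem_singleton]; omega
      · simp only [B, Finset.mem_insert, Finset.mem_singleton]; omega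
      · omega
    · set i := (n + 1) ^ 2 - 4 - j with hi
      have h1 : 0 < P (n + 1) i := by
        refine P_mono (by omega) (ih i ?_ ?_ ?_)
        · simp only [B, Finset.mem_insert, Finset.mem_singleton]; omega
        · simp only [B, Finset.mem_insert, Finset.mem_singleton]; omega
        · omega
      have h2 := P_compl (m := n + 1) (by omega) (by omega) h1
      have hji : (n + 1) ^ 2 - 4 - i = j := by omega
      rwa [hji] at h2

/-- Let `m ≥ 7` and `0 ≤ k ≤ m² - 7`. Then `P_{R(m)}(k) + P_{R(m)}(k+3) > 0` if and only if
`k ∉ {1, 3, m² - 10, m² - 8}`. -/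
theorem P_pos_iff_three (m k : ℕ) (hm : 7 ≤ m) (hk : k ≤ m ^ 2 - 7) :
    0 < P m k + P m (k + 3) ↔
      k ∉ ({1, 3, m ^ 2 - 10, m ^ 2 - 8} : Finset ℕ) := by
  rcases Nat.lt_or_ge m 10 with h10 | h10
  · interval_cases m
    · exact (by decide :
        ∀ k' < 43, (0 < P 7 k' + P 7 (k' + 3) ↔
          k' ∉ ({1, 3, 7 ^ 2 - 10, 7 ^ 2 - 8} : Finset ℕ))) k (by norm_num at hk; omega)
    · exact (by decide :
        ∀ k' < 58, (0 < P 8 k' + P 8 (k' + 3) ↔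
          k' ∉ ({1, 3, 8 ^ 2 - 10, 8 ^ 2 - 8} : Finset ℕ))) k (by norm_num at hk; omega)
    · exact (by decide :
        ∀ k' < 75, (0 < P 9 k' + P 9 (k' + 3) ↔
          k' ∉ ({1, 3, 9 ^ 2 - 10, 9 ^ 2 - 8} : Finset ℕ))) k (by norm_num at hk; omega)
  · have big : 2 * m + 27 ≤ m ^ 2 := by nlinarith
    constructor
    · intro hpos hkmem
      simp only [Finset.mem_insert, Finset.mem_singleton] at hkmem
      have hor : 0 < P m k ∨ 0 < P m (k + 3) := by omega
      rcases hor with hp | hp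
      · have h := P_pos_imp (by omega) hp
        simp only [B, Finset.mem_insert, Finset.mem_singleton] at h
        omega
      · have h := P_pos_imp (by omega) hp
        simp only [B, Finset.mem_insert, Finset.mem_singleton] at h
        omega
    · intro hkmem
      simp only [Finset.mem_insert, Finset.mem_singleton] at hkmem
      have hor : (k ∉ B ∧ m ^ 2 - 4 - k ∉ B ∧ k ≤ m ^ 2 - 4) ∨
          ((k + 3) ∉ B ∧ m ^ 2 - 4 - (k + 3) ∉ B ∧ k + 3 ≤ m ^ 2 - 4) := by
        simp only [B, Finset.mem_insert, Finset.mem_singleton]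
        omega
      rcases hor with ⟨a, b, c⟩ | ⟨a, b, c⟩
      · have := char_bwd m h10 k a b c; omega
      · have := char_bwd m h10 (k + 3) a b c; omega

end SquareKronecker
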